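/- Let α < 1 and suppose c* = α^{-k}·γ for some integer k ≥ 0. Then for every j with 1 ≤ j ≤ k+1 one has φ^j(γ) = α^{-(k-j+1)}·γ; in particular φ^{k+1}(γ) = γ, so γ is a periodic point of φ whose orbit is the (k+1)-cycle {α^{-i}·γ : 0 ≤ i ≤ k}. -/

import Mathlib

open Filter

/-- The real map describing how `f(x) = a x ((x+b)/(x+c))²` transforms the p-adic
absolute value `|x|_p` when `α = |a|_p`, `β = |b|_p`, `γ = |c|_p` and `β < γ`. -/
noncomputable def phiMap (α β γ bs cs : ℝ) : ℝ → ℝ := fun r =>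
  if r < β then α * β ^ 2 / γ ^ 2 * r
  else if r = β then bs
  else if r < γ then α / γ ^ 2 * r ^ 3
  else if r = γ then cs
  else α * r

theorem phi_gamma_periodic_cycle
    (α β γ bs cs : ℝ) (hα : 0 < α) (hβ : 0 < β) (hγ : 0 < γ)
    (hbs : 0 < bs) (hcs : 0 < cs) (hβγ : β < γ)
    (hbsle : bs ≤ α * β ^ 3 / γ ^ 2) (hcsge : α * γ ≤ cs)
    (hα1 : α < 1) (k : ℕ) (hcsB : cs = γ / α ^ k) :
    (∀ j : ℕ, 1 ≤ j → j ≤ k + 1 →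
      (phiMap α β γ bs cs)^[j] γ = γ / α ^ (k + 1 - j)) ∧
    (phiMap α β γ bs cs)^[k + 1] γ = γ := by
  have hγβ : ¬ γ < β := not_lt.2 hβγ.le
  have hγeβ : γ ≠ β := ne_of_gt hβγ
  have hphiγ : phiMap α β γ bs cs γ = cs := by
    simp [phiMap, hγβ, hγeβ]
  have hgt : ∀ r : ℝ, γ < r → phiMap α β γ bs cs r = α * r := by
    intro r hr
    have h1 : ¬ r < β := not_lt.2 (hβγ.le.trans hr.le)
    have h2 : r ≠ β := ne_of_gt (hβγ.trans hr)
    have h3 : ¬ r < γ := not_lt.2 hr.le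
    have h4 : r ≠ γ := ne_of_gt hr
    simp [phiMap, h1, h2, h3, h4]
  have hbig : ∀ m : ℕ, 1 ≤ m → γ < γ / α ^ m := by
    intro m hm
    have hpow : α ^ m < 1 := pow_lt_one₀ hα.le hα1 (by omega)
    have hpowpos : (0:ℝ) < α ^ m := pow_pos hα m
    rw [lt_div_iff₀ hpowpos]
    nlinarith
  have main : ∀ j : ℕ, 1 ≤ j → j ≤ k + 1 →
      (phiMap α β γ bs cs)^[j] γ = γ / α ^ (k + 1 - j) := by
    intro j
    induction j with
    | zero => intro h; omega
    | succ n ih =>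
      intro _ hle
      rcases Nat.eq_zero_or_pos n with hn | hn
      · subst hn
        simp only [zero_add, Function.iterate_one, Nat.add_sub_cancel]
        rw [hphiγ, hcsB]
      · have hnle : n ≤ k := by omega
        have hval := ih hn (by omega)
        rw [Function.iterate_succ_apply', hval]
        have hm1 : 1 ≤ k + 1 - n := by omega
        rw [hgt _ (hbig _ hm1)]
        have hE : k + 1 - n = (k - n) + 1 := by omega
        have hE2 : k + 1 - (n + 1) = k - n := by omega
        rw [hE, hE2, pow_succ]
        have hp : (α ^ (k - n)) ≠ 0 := ne_of_gt (pow_pos hα _)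
        field_simp
  refine ⟨main, ?_⟩
  have := main (k + 1) (by omega) le_rfl
  simpa using this
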